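/- For any finite weighted graph with at least one edge and no isolated vertices, the dual Cheeger constant satisfies h̄ > 1/2. -/

import Mathlib

open Finset

section DualCheegerAux

variable {V : Type*} [Fintype V] [DecidableEq V] {F : Type*} [Field F] [LinearOrder F] [IsStrictOrderedRing F]
variable (b : V → V → F)

/-- weight from `x` into `s` -/
private def fw (s : Finset V) (x : V) : F := ∑ z ∈ s, b x z

/-- cut weight of the bipartition `(A, Aᶜ)` -/
private def cutw (A : Finset V) : F := ∑ x ∈ A, fw b Aᶜ x

private lemma fw_erase (hloop : ∀ x, b x x = 0) (s : Finset V) (y : V) :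
    fw b (s.erase y) y = fw b s y :=
  Finset.sum_erase _ (hloop y)

private lemma fw_insert {s : Finset V} {y : V} (hy : y ∉ s) (x : V) :
    fw b (insert y s) x = b x y + fw b s x :=
  Finset.sum_insert hy

private lemma fw_mem_erase {s : Finset V} {y : V} (hy : y ∈ s) (x : V) :
    fw b (s.erase y) x = fw b s x - b x y :=
  Finset.sum_erase_eq_sub hy

private lemma fw_add_compl (s : Finset V) (x : V) :
    fw b s x + fw b sᶜ x = ∑ z, b x z :=
  Finset.sum_add_sum_compl s _

private lemma cut_sym (hsymm : ∀ x y, b x y = b y x) (A : Finset V) :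
    cutw b A = ∑ x ∈ Aᶜ, fw b A x := by
  unfold cutw fw
  rw [Finset.sum_comm]
  exact Finset.sum_congr rfl fun z _ => Finset.sum_congr rfl fun x _ => hsymm x z

private lemma cut_erase (hsymm : ∀ x y, b x y = b y x) (hloop : ∀ x, b x x = 0)
    {A : Finset V} {y : V} (hy : y ∈ A) :
    cutw b (A.erase y) = cutw b A - fw b Aᶜ y + fw b A y := by
  have hyc : y ∉ Aᶜ := by simp [hy]
  unfold cutw
  rw [Finset.compl_erase]
  have : ∀ x ∈ A.erase y, fw b (insert y Aᶜ) x = b x y + fw b Aᶜ x :=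
    fun x _ => fw_insert b hyc x
  rw [Finset.sum_congr rfl this, Finset.sum_add_distrib]
  have h1 : ∑ x ∈ A.erase y, b x y = fw b A y := by
    rw [show ∑ x ∈ A.erase y, b x y = ∑ x ∈ A.erase y, b y x from
      Finset.sum_congr rfl fun x _ => hsymm x y]
    exact fw_erase b hloop A y
  have h2 : ∑ x ∈ A.erase y, fw b Aᶜ x = cutw b A - fw b Aᶜ y :=
    Finset.sum_erase_eq_sub hy
  rw [h1, h2]; unfold cutw; ring

private lemma cut_insert (hsymm : ∀ x y, b x y = b y x) (hloop : ∀ x, b x x = 0)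
    {A : Finset V} {y : V} (hy : y ∉ A) :
    cutw b (insert y A) = cutw b A + fw b Aᶜ y - fw b A y := by
  have hmem : y ∈ insert y A := Finset.mem_insert_self y A
  have h := cut_erase b hsymm hloop hmem
  rw [Finset.erase_insert hy] at h
  have hfw1 : fw b (insert y A) y = fw b A y := by
    rw [fw_insert b hy, hloop]; ring
  have hfw2 : fw b (insert y A)ᶜ y = fw b Aᶜ y := by
    rw [Finset.compl_insert]; exact fw_erase b hloop _ y
  rw [hfw1, hfw2] at h
  linarith

/-- cut of the complement equals cut -/
private lemma cut_compl (hsymm : ∀ x y, b x y = b y x) (A : Finset V) :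
    cutw b Aᶜ = cutw b A := by
  rw [cut_sym b hsymm, compl_compl]; rfl

private lemma ratio_gt (hsymm : ∀ x y, b x y = b y x) (hiso : ∀ x, 0 < ∑ y, b x y)
    {A : Finset V} (hA : A.Nonempty) (hAc : Aᶜ.Nonempty)
    (h1 : ∀ y ∈ A, fw b A y ≤ fw b Aᶜ y)
    (h2 : ∀ y ∈ Aᶜ, fw b Aᶜ y ≤ fw b A y)
    (hstrict : ∃ y ∈ A, fw b A y < fw b Aᶜ y) :
    1 / 2 < 2 * cutw b A / ((∑ x ∈ A, ∑ z, b x z) + (∑ x ∈ Aᶜ, ∑ z, b x z)) := by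
  set C := cutw b A with hC
  set D1 := ∑ x ∈ A, ∑ z, b x z with hD1
  set D2 := ∑ x ∈ Aᶜ, ∑ z, b x z with hD2
  have hD1pos : 0 < D1 := Finset.sum_pos (fun x _ => hiso x) hA
  have hD2pos : 0 < D2 := Finset.sum_pos (fun x _ => hiso x) hAc
  have hCeq1 : C = ∑ x ∈ A, fw b Aᶜ x := rfl
  have hCeq2 : C = ∑ x ∈ Aᶜ, fw b A x := cut_sym b hsymm A
  have key1 : D1 < 2 * C := by
    have : ∑ x ∈ A, (fw b A x + fw b Aᶜ x) < ∑ x ∈ A, (2 * fw b Aᶜ x) := by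
      apply Finset.sum_lt_sum (fun x hx => by linarith [h1 x hx])
      obtain ⟨y, hy, hlt⟩ := hstrict
      exact ⟨y, hy, by linarith⟩
    calc D1 = ∑ x ∈ A, (fw b A x + fw b Aᶜ x) :=
          Finset.sum_congr rfl fun x _ => (fw_add_compl b A x).symm
      _ < ∑ x ∈ A, (2 * fw b Aᶜ x) := this
      _ = 2 * C := by rw [hCeq1, Finset.mul_sum]
  have key2 : D2 ≤ 2 * C := by
    calc D2 = ∑ x ∈ Aᶜ, (fw b A x + fw b Aᶜ x) :=
          Finset.sum_congr rfl fun x _ => (fw_add_compl b A x).symm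
      _ ≤ ∑ x ∈ Aᶜ, (2 * fw b A x) :=
          Finset.sum_le_sum (fun x hx => by linarith [h2 x hx])
      _ = 2 * C := by rw [hCeq2, Finset.mul_sum]
  rw [div_lt_div_iff₀ (by norm_num) (by linarith)]
  linarith

end DualCheegerAux

theorem dual_cheeger_gt_half
    {V : Type*} [Fintype V] [DecidableEq V] {F : Type*} [Field F] [LinearOrder F] [IsStrictOrderedRing F]
    (b : V → V → F)
    (hsymm : ∀ x y, b x y = b y x)
    (hnn : ∀ x y, 0 ≤ b x y)
    (hloop : ∀ x, b x x = 0)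
    (hiso : ∀ x, 0 < ∑ y, b x y)
    (hedge : ∃ x y, 0 < b x y)
    (hbar : F)
    (hmax : IsGreatest {r : F | ∃ V1 V2 : Finset V, V1.Nonempty ∧ V2.Nonempty ∧
      Disjoint V1 V2 ∧
      r = 2 * (∑ x ∈ V1, ∑ y ∈ V2, b x y) /
        ((∑ x ∈ V1, ∑ y, b x y) + (∑ x ∈ V2, ∑ y, b x y))} hbar) :
    1 / 2 < hbar := by
  classical
  -- get a maximizer of the cut over all subsets
  obtain ⟨A, -, hAmax⟩ := Finset.exists_max_image (Finset.univ : Finset (Finset V))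
    (cutw b) ⟨∅, Finset.mem_univ ∅⟩
  have hAmax' : ∀ B : Finset V, cutw b B ≤ cutw b A := fun B => hAmax B (Finset.mem_univ B)
  -- the max cut is positive
  obtain ⟨x0, y0, hxy0⟩ := hedge
  have hx0y0 : x0 ≠ y0 := by rintro rfl; rw [hloop] at hxy0; exact lt_irrefl _ hxy0
  have hcutpos : 0 < cutw b A := by
    have h1 : cutw b {x0} = ∑ z, b x0 z := by
      unfold cutw fw
      rw [Finset.sum_singleton]
      have : ({x0} : Finset V)ᶜ = Finset.univ.erase x0 := by
        ext z; simp [eq_comm]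
      rw [this, Finset.sum_erase _ (hloop x0)]
    have := hAmax' {x0}
    rw [h1] at this
    linarith [hiso x0]
  -- nonemptiness of both sides
  have hA : A.Nonempty := by
    rcases A.eq_empty_or_nonempty with rfl | h
    · simp [cutw] at hcutpos
    · exact h
  have hAc : Aᶜ.Nonempty := by
    by_contra h
    rw [Finset.not_nonempty_iff_eq_empty] at h
    have : cutw b A = 0 := by
      unfold cutw fw; rw [h]; simp
    linarith
  -- local maximality conditions
  have hcond1 : ∀ y ∈ A, fw b A y ≤ fw b Aᶜ y := by
    intro y hy
    have := hAmax' (A.erase y)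
    rw [cut_erase b hsymm hloop hy] at this
    linarith
  have hcond2 : ∀ y ∈ Aᶜ, fw b Aᶜ y ≤ fw b A y := by
    intro y hy
    have hyA : y ∉ A := Finset.mem_compl.mp hy
    have := hAmax' (insert y A)
    rw [cut_insert b hsymm hloop hyA] at this
    linarith
  -- the ratio for a good set is in the set, hence ≤ hbar
  have hle : ∀ B : Finset V, B.Nonempty → Bᶜ.Nonempty →
      2 * cutw b B / ((∑ x ∈ B, ∑ z, b x z) + (∑ x ∈ Bᶜ, ∑ z, b x z)) ≤ hbar := by
    intro B hB hBc
    apply hmax.2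
    exact ⟨B, Bᶜ, hB, hBc, disjoint_compl_right, rfl⟩
  -- case analysis
  by_cases hs1 : ∃ y ∈ A, fw b A y < fw b Aᶜ y
  · exact lt_of_lt_of_le (ratio_gt b hsymm hiso hA hAc hcond1 hcond2 hs1) (hle A hA hAc)
  by_cases hs2 : ∃ y ∈ Aᶜ, fw b Aᶜ y < fw b A y
  · -- apply to the complement
    have hc1 : ∀ y ∈ Aᶜ, fw b Aᶜ y ≤ fw b Aᶜᶜ y := by
      intro y hy; rw [compl_compl]; exact hcond2 y hy
    have hc2 : ∀ y ∈ Aᶜᶜ, fw b Aᶜᶜ y ≤ fw b Aᶜ y := by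
      rw [compl_compl]; exact hcond1
    have hs2' : ∃ y ∈ Aᶜ, fw b Aᶜ y < fw b Aᶜᶜ y := by
      obtain ⟨y, hy, h⟩ := hs2; exact ⟨y, hy, by rwa [compl_compl]⟩
    have hAcc : Aᶜᶜ.Nonempty := by rwa [compl_compl]
    exact lt_of_lt_of_le (ratio_gt b hsymm hiso hAc hAcc hc1 hc2 hs2') (hle Aᶜ hAc hAcc)
  -- otherwise everything is balanced; modify the partition
  push_neg at hs1 hs2
  have hbal1 : ∀ y ∈ A, fw b A y = fw b Aᶜ y :=
    fun y hy => le_antisymm (hcond1 y hy) (hs1 y hy)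
  obtain ⟨x, hx⟩ := hA
  have hfwpos : 0 < fw b A x := by
    have := fw_add_compl b A x
    have hb := hbal1 x hx
    have := hiso x
    -- fw A x + fw Aᶜ x = deg x, fw A x = fw Aᶜ x
    nlinarith [fw_add_compl b A x]
  -- find a neighbor y of x inside A
  have : ∃ y ∈ A, 0 < b x y := by
    by_contra h
    push_neg at h
    have : fw b A x ≤ 0 := Finset.sum_nonpos fun y hy => h y hy
    linarith
  obtain ⟨y, hyA, hbxy⟩ := this
  have hxy : x ≠ y := by rintro rfl; rw [hloop] at hbxy; exact lt_irrefl _ hbxy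
  set A1 := A.erase y with hA1def
  have hxA1 : x ∈ A1 := Finset.mem_erase.mpr ⟨hxy, hx⟩
  have hA1 : A1.Nonempty := ⟨x, hxA1⟩
  have hA1c : A1ᶜ.Nonempty := ⟨y, by simp [hA1def]⟩
  -- A1 is also a maximizer
  have hcutA1 : cutw b A1 = cutw b A := by
    rw [hA1def, cut_erase b hsymm hloop hyA, hbal1 y hyA]; ring
  have hA1max : ∀ B : Finset V, cutw b B ≤ cutw b A1 := by
    intro B; rw [hcutA1]; exact hAmax' B
  -- local conditions for A1
  have hcond1' : ∀ z ∈ A1, fw b A1 z ≤ fw b A1ᶜ z := by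
    intro z hz
    have := hA1max (A1.erase z)
    rw [cut_erase b hsymm hloop hz] at this
    linarith
  have hcond2' : ∀ z ∈ A1ᶜ, fw b A1ᶜ z ≤ fw b A1 z := by
    intro z hz
    have hzA : z ∉ A1 := Finset.mem_compl.mp hz
    have := hA1max (insert z A1)
    rw [cut_insert b hsymm hloop hzA] at this
    linarith
  -- strictness at x
  have hstrict : ∃ z ∈ A1, fw b A1 z < fw b A1ᶜ z := by
    refine ⟨x, hxA1, ?_⟩
    have e1 : fw b A1 x = fw b A x - b x y := fw_mem_erase b hyA x
    have e2 : fw b A1ᶜ x = b x y + fw b Aᶜ x := by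
      rw [hA1def, Finset.compl_erase]
      exact fw_insert b (by simp [hyA]) x
    rw [e1, e2, ← hbal1 x hx]
    linarith
  exact lt_of_lt_of_le (ratio_gt b hsymm hiso hA1 hA1c hcond1' hcond2' hstrict)
    (hle A1 hA1 hA1c)
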